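/- Each semi-dual component φ_i of entropy-regularized optimal transport is (5 n p'_i / η)-smooth with respect to the ℓ∞ norm: for every i ∈ {1,…,n} and all λ, λ' ∈ ℝⁿ, ‖∇φ_i(λ) − ∇φ_i(λ')‖₁ ≤ (5 n p'_i / η) ‖λ − λ'‖_∞. -/

import Mathlib

open scoped BigOperators

/-- The `i`-th semi-dual component of entropy-regularized optimal transport:
`φ_i(λ) = n p'_i ( −⟨q', λ⟩ − η log p'_i + η log( Σ_j exp((λ_j − C_{ij} − η)/η) ) + η )`. -/
noncomputable def otSemiDualComponent (n : ℕ) (η : ℝ) (C : Fin n → Fin n → ℝ)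
    (p' q' : Fin n → ℝ) (i : Fin n) (lam : EuclideanSpace ℝ (Fin n)) : ℝ :=
  n * p' i * (-(∑ j, q' j * lam j) - η * Real.log (p' i)
    + η * Real.log (∑ j, Real.exp ((lam j - C i j - η) / η)) + η)


lemma abs_exp_sub_exp_le (x y : ℝ) :
    |Real.exp x - Real.exp y| ≤ max (Real.exp x) (Real.exp y) * |x - y| := by
  wlog h : y ≤ x generalizing x y
  · rw [abs_sub_comm, abs_sub_comm x y, max_comm]
    exact this y x (le_of_not_ge h)
  rw [abs_of_nonneg (sub_nonneg.2 (Real.exp_le_exp.2 h)), abs_of_nonneg (sub_nonneg.2 h),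
    max_eq_left (Real.exp_le_exp.2 h)]
  have h1 : Real.exp y = Real.exp x * Real.exp (y - x) := by
    rw [← Real.exp_add]; ring_nf
  have h2 : (y - x) + 1 ≤ Real.exp (y - x) := Real.add_one_le_exp _
  nlinarith [Real.exp_pos x]

lemma softmax_l1 {n : ℕ} (hn : 1 ≤ n) (u v : Fin n → ℝ) {s : ℝ} (hs : 0 ≤ s)
    (h : ∀ k, |u k - v k| ≤ s) :
    ∑ k, |Real.exp (u k) / (∑ j, Real.exp (u j)) - Real.exp (v k) / (∑ j, Real.exp (v j))|
      ≤ 5 * s := by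
  haveI : Nonempty (Fin n) := Fin.pos_iff_nonempty.mp hn
  set a : Fin n → ℝ := fun k => Real.exp (u k) with ha
  set b : Fin n → ℝ := fun k => Real.exp (v k) with hb
  set A : ℝ := ∑ j, a j with hA
  set B : ℝ := ∑ j, b j with hB
  have hApos : 0 < A := Finset.sum_pos (fun j _ => Real.exp_pos _) Finset.univ_nonempty
  have hBpos : 0 < B := Finset.sum_pos (fun j _ => Real.exp_pos _) Finset.univ_nonempty
  have hsumA : ∑ k, a k / A = 1 := by
    rw [← Finset.sum_div, ← hA, div_self hApos.ne']
  have hsumB : ∑ k, b k / B = 1 := by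
    rw [← Finset.sum_div, ← hB, div_self hBpos.ne']
  rcases le_or_gt (2/5 : ℝ) s with hcase | hcase
  · calc ∑ k, |a k / A - b k / B| ≤ ∑ k, (a k / A + b k / B) := by
          refine Finset.sum_le_sum fun k _ => ?_
          have h1 : 0 ≤ a k / A := div_nonneg (Real.exp_pos _).le hApos.le
          have h2 : 0 ≤ b k / B := div_nonneg (Real.exp_pos _).le hBpos.le
          rw [abs_sub_le_iff]
          constructor <;> linarith
      _ = 2 := by rw [Finset.sum_add_distrib, hsumA, hsumB]; norm_num
      _ ≤ 5 * s := by linarith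
  · -- s < 2/5
    have hes : Real.exp s ≤ 5/3 := by
      have h1 : 1 - s ≤ Real.exp (-s) := by
        have := Real.add_one_le_exp (-s); linarith
      have h2 : (0:ℝ) < 1 - s := by linarith
      have h3 : Real.exp s = (Real.exp (-s))⁻¹ := by
        rw [← Real.exp_neg, neg_neg]
      rw [h3]
      have h4 : (Real.exp (-s))⁻¹ ≤ (1 - s)⁻¹ := by
        apply inv_anti₀ h2 h1
      have h5 : (1 - s)⁻¹ ≤ (1 - 2/5 : ℝ)⁻¹ := by
        apply inv_anti₀ (by norm_num) (by linarith)
      calc (Real.exp (-s))⁻¹ ≤ (1 - s)⁻¹ := h4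
        _ ≤ (1 - 2/5 : ℝ)⁻¹ := h5
        _ = 5/3 := by norm_num
    have keyk : ∀ k, |a k - b k| ≤ b k * Real.exp s * s := by
      intro k
      have h1 := abs_exp_sub_exp_le (u k) (v k)
      have h2 : max (Real.exp (u k)) (Real.exp (v k)) ≤ b k * Real.exp s := by
        apply max_le
        · rw [hb, ← Real.exp_add]
          apply Real.exp_le_exp.2
          have := abs_le.1 (h k); linarith [this.2]
        · rw [hb]
          nth_rewrite 1 [← mul_one (Real.exp (v k))]
          exact mul_le_mul_of_nonneg_left (Real.one_le_exp hs) (Real.exp_pos _).le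
      calc |a k - b k| ≤ max (Real.exp (u k)) (Real.exp (v k)) * |u k - v k| := h1
        _ ≤ (b k * Real.exp s) * s := by
            apply mul_le_mul h2 (h k) (abs_nonneg _)
            positivity
    have keysum : ∑ k, |a k - b k| ≤ B * Real.exp s * s := by
      calc ∑ k, |a k - b k| ≤ ∑ k, b k * Real.exp s * s := Finset.sum_le_sum fun k _ => keyk k
        _ = B * Real.exp s * s := by rw [← Finset.sum_mul, ← Finset.sum_mul]
    have hAB : |A - B| ≤ B * Real.exp s * s := by
      calc |A - B| = |∑ k, (a k - b k)| := by rw [Finset.sum_sub_distrib]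
        _ ≤ ∑ k, |a k - b k| := Finset.abs_sum_le_sum_abs _ _
        _ ≤ B * Real.exp s * s := keysum
    have term : ∀ k, |a k / A - b k / B| ≤ |a k - b k| / B + a k / (A * B) * |B - A| := by
      intro k
      have hid : a k / A - b k / B = (a k - b k) / B + a k * (B - A) / (A * B) := by
        field_simp
        ring
      rw [hid]
      calc |(a k - b k) / B + a k * (B - A) / (A * B)|
          ≤ |(a k - b k) / B| + |a k * (B - A) / (A * B)| := abs_add_le _ _
        _ = |a k - b k| / B + a k / (A * B) * |B - A| := by
            rw [abs_div, abs_of_pos hBpos, abs_div, abs_of_pos (mul_pos hApos hBpos),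
              abs_mul, abs_of_pos (show 0 < a k from Real.exp_pos _)]
            ring
    calc ∑ k, |a k / A - b k / B|
        ≤ ∑ k, (|a k - b k| / B + a k / (A * B) * |B - A|) := Finset.sum_le_sum fun k _ => term k
      _ = (∑ k, |a k - b k|) / B + A / (A * B) * |B - A| := by
          rw [Finset.sum_add_distrib, ← Finset.sum_div, ← Finset.sum_mul, ← Finset.sum_div]
      _ = (∑ k, |a k - b k|) / B + |B - A| / B := by
          congr 1
          field_simp
      _ ≤ (B * Real.exp s * s) / B + (B * Real.exp s * s) / B := by
          rw [abs_sub_comm] at hAB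
          gcongr
      _ = 2 * Real.exp s * s := by field_simp; ring
      _ ≤ 5 * s := by nlinarith [Real.exp_pos s]

lemma grad_eq (n : ℕ) (hn : 1 ≤ n) (η : ℝ) (hη : 0 < η) (C : Fin n → Fin n → ℝ)
    (p' q' : Fin n → ℝ) (i : Fin n) (lam : EuclideanSpace ℝ (Fin n)) :
    gradient (otSemiDualComponent n η C p' q' i) lam =
      (WithLp.toLp 2 (fun k => (n : ℝ) * p' i *
        (Real.exp ((lam k - C i k - η) / η) / (∑ j, Real.exp ((lam j - C i j - η) / η)) - q' k))
        : EuclideanSpace ℝ (Fin n)) := by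
  set a : Fin n → ℝ := fun j => Real.exp ((lam j - C i j - η) / η) with ha
  set A : ℝ := ∑ j, a j with hA
  have hApos : 0 < A := by
    haveI : Nonempty (Fin n) := Fin.pos_iff_nonempty.mp hn
    exact Finset.sum_pos (fun j _ => Real.exp_pos _) Finset.univ_nonempty
  set g : EuclideanSpace ℝ (Fin n) := WithLp.toLp 2 (fun k => (n : ℝ) * p' i * (a k / A - q' k)) with hg
  have hproj : ∀ j : Fin n, HasFDerivAt (fun x : EuclideanSpace ℝ (Fin n) => x j)
      (EuclideanSpace.proj j : EuclideanSpace ℝ (Fin n) →L[ℝ] ℝ) lam :=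
    fun j => by exact (EuclideanSpace.proj j : EuclideanSpace ℝ (Fin n) →L[ℝ] ℝ).hasFDerivAt
  have hexp : ∀ j : Fin n, HasFDerivAt (fun x : EuclideanSpace ℝ (Fin n) =>
      Real.exp ((x j - C i j - η) / η)) ((a j / η) • (EuclideanSpace.proj j : EuclideanSpace ℝ (Fin n) →L[ℝ] ℝ)) lam := by
    intro j
    have h1 : HasFDerivAt (fun x : EuclideanSpace ℝ (Fin n) => (x j - C i j - η) / η)
        ((η⁻¹) • (EuclideanSpace.proj j : EuclideanSpace ℝ (Fin n) →L[ℝ] ℝ)) lam := by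
      simpa [div_eq_inv_mul] using (((hproj j).sub_const (C i j)).sub_const η).const_mul η⁻¹
    have := h1.exp
    rw [smul_smul, ← div_eq_mul_inv] at this
    exact this
  have hS : HasFDerivAt (fun x : EuclideanSpace ℝ (Fin n) => ∑ j, Real.exp ((x j - C i j - η) / η))
      (∑ j, (a j / η) • (EuclideanSpace.proj j : EuclideanSpace ℝ (Fin n) →L[ℝ] ℝ)) lam :=
    HasFDerivAt.fun_sum (fun j _ => hexp j)
  have hlog : HasFDerivAt (fun x : EuclideanSpace ℝ (Fin n) =>
      Real.log (∑ j, Real.exp ((x j - C i j - η) / η)))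
      (A⁻¹ • ∑ j, (a j / η) • (EuclideanSpace.proj j : EuclideanSpace ℝ (Fin n) →L[ℝ] ℝ)) lam :=
    hS.log hApos.ne'
  have hlin : HasFDerivAt (fun x : EuclideanSpace ℝ (Fin n) => ∑ j, q' j * x j)
      (∑ j, (q' j) • (EuclideanSpace.proj j : EuclideanSpace ℝ (Fin n) →L[ℝ] ℝ)) lam :=
    HasFDerivAt.fun_sum (fun j _ => (hproj j).const_mul (q' j))
  have hf : HasFDerivAt (otSemiDualComponent n η C p' q' i)
      (((n : ℝ) * p' i) • ((-(∑ j, (q' j) • (EuclideanSpace.proj j : EuclideanSpace ℝ (Fin n) →L[ℝ] ℝ)))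
        + η • (A⁻¹ • ∑ j, (a j / η) • (EuclideanSpace.proj j : EuclideanSpace ℝ (Fin n) →L[ℝ] ℝ)))) lam := by
    have h2 := ((((hlin.neg).sub_const (η * Real.log (p' i))).add (hlog.const_mul η)).add_const η).const_mul ((n : ℝ) * p' i)
    unfold otSemiDualComponent
    exact h2
  have hgrad : HasGradientAt (otSemiDualComponent n η C p' q' i) g lam := by
    rw [hasGradientAt_iff_hasFDerivAt]
    refine hf.congr_fderiv ?_
    symm
    refine ContinuousLinearMap.ext fun v => ?_
    simp only [InnerProductSpace.toDual_apply_apply, PiLp.inner_apply, RCLike.inner_apply,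
      ContinuousLinearMap.add_apply, ContinuousLinearMap.sub_apply, ContinuousLinearMap.neg_apply,
      ContinuousLinearMap.smul_apply, ContinuousLinearMap.sum_apply, ContinuousLinearMap.zero_apply,
      PiLp.proj_apply, smul_eq_mul, Finset.mul_sum]
    have hrhs : (-∑ x, q' x * v x + ∑ x, η * (A⁻¹ * (a x / η * v x)))
        = ∑ x, (a x / A - q' x) * v x := by
      rw [← Finset.sum_neg_distrib, ← Finset.sum_add_distrib]
      refine Finset.sum_congr rfl fun x _ => ?_
      field_simp
      ring
    rw [hrhs, Finset.mul_sum]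
    refine Finset.sum_congr rfl fun x _ => ?_
    simp only [starRingEnd_apply, star_trivial, hg]
    ring
  exact hgrad.gradient

/-- each semi-dual component `φ_i` is `(5 n p'_i / η)`-smooth w.r.t. the
ℓ∞ norm: `‖∇φ_i(λ) − ∇φ_i(λ')‖₁ ≤ (5 n p'_i / η) ‖λ − λ'‖_∞`.  The ℓ₁ norm of the gradient
difference is written out as a sum of absolute values of its coordinates and the ℓ∞ norm is
the sup norm on `Fin n → ℝ`. -/
theorem otSemiDualComponent_smooth_linf (n : ℕ) (hn : 1 ≤ n) (η : ℝ) (hη : 0 < η)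
    (C : Fin n → Fin n → ℝ) (p' q' : Fin n → ℝ)
    (hp_pos : ∀ i, 0 < p' i) (hq_nonneg : ∀ j, 0 ≤ q' j)
    (hp_sum : ∑ i, p' i = 1) (hq_sum : ∑ j, q' j = 1) :
    ∀ (i : Fin n) (lam lam' : EuclideanSpace ℝ (Fin n)),
      ∑ k, |gradient (otSemiDualComponent n η C p' q' i) lam k
            - gradient (otSemiDualComponent n η C p' q' i) lam' k|
        ≤ (5 * n * p' i / η) * ‖(fun k => lam k - lam' k : Fin n → ℝ)‖ := by
  intro i lam lam'
  set t : ℝ := ‖(fun k => lam k - lam' k : Fin n → ℝ)‖ with ht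
  have htnn : 0 ≤ t := norm_nonneg _
  have hcoord : ∀ k, |lam k - lam' k| ≤ t := by
    intro k
    simpa using norm_le_pi_norm (fun k => lam k - lam' k : Fin n → ℝ) k
  set u : Fin n → ℝ := fun k => (lam k - C i k - η) / η with hu
  set v : Fin n → ℝ := fun k => (lam' k - C i k - η) / η with hv
  have huv : ∀ k, |u k - v k| ≤ t / η := by
    intro k
    have : u k - v k = (lam k - lam' k) / η := by rw [hu, hv]; ring
    rw [this, abs_div, abs_of_pos hη]
    gcongr
    exact hcoord k
  have hsm := softmax_l1 hn u v (div_nonneg htnn hη.le) huv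
  rw [grad_eq n hn η hη C p' q' i lam, grad_eq n hn η hη C p' q' i lam']
  have hc : 0 ≤ (n : ℝ) * p' i := mul_nonneg (Nat.cast_nonneg n) (hp_pos i).le
  calc ∑ k, |(n : ℝ) * p' i * (Real.exp (u k) / (∑ j, Real.exp (u j)) - q' k)
        - (n : ℝ) * p' i * (Real.exp (v k) / (∑ j, Real.exp (v j)) - q' k)|
      = ∑ k, (n : ℝ) * p' i * |Real.exp (u k) / (∑ j, Real.exp (u j))
          - Real.exp (v k) / (∑ j, Real.exp (v j))| := by
        refine Finset.sum_congr rfl fun k _ => ?_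
        rw [← mul_sub, sub_sub_sub_cancel_right, abs_mul, abs_of_nonneg hc]
    _ = (n : ℝ) * p' i * ∑ k, |Real.exp (u k) / (∑ j, Real.exp (u j))
          - Real.exp (v k) / (∑ j, Real.exp (v j))| := by rw [Finset.mul_sum]
    _ ≤ (n : ℝ) * p' i * (5 * (t / η)) := by
        exact mul_le_mul_of_nonneg_left hsm hc
    _ = (5 * n * p' i / η) * t := by field_simp
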